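/- Suppose s = ⌊a·log_q n⌋, t ≥ δ·s, and there exists a string x of length n over an alphabet of size q such that every string obtained from x by at most t substitutions is s-repeat-free. Then the ⌊n/s⌋ disjoint length-s blocks x_{is+[s]}, 0 ≤ i ≤ ⌊n/s⌋ − 1, are pairwise distinct and form a code in Σ^s of size ⌊n/s⌋ with minimum Hamming distance strictly greater than t. -/

import Mathlib

/-- The length-`s` substring of `x` starting at index `i`. -/
def substr {α : Type*} (x : ℕ → α) (i s : ℕ) : Fin s → α := fun k => x (i + k)

/-- A string of length `n` is `s`-repeat-free if all its length-`s` substrings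
are pairwise distinct. -/
def repeatFree {α : Type*} (x : ℕ → α) (n s : ℕ) : Prop :=
  ∀ i j, i + s ≤ n → j + s ≤ n → substr x i s = substr x j s → i = j

/-- Hamming distance between the length-`n` prefixes of `x` and `y`. -/
def dH {α : Type*} [DecidableEq α] (x y : ℕ → α) (n : ℕ) : ℕ :=
  ((Finset.range n).filter (fun i => x i ≠ y i)).card

/-- if `s = ⌊a·log_q n⌋`, `t ≥ δ·s`, and `x ∈ Σ^n` is
`(t,s)`-resilient repeat-free (every `y` within Hamming distance `t` of `x`
is `s`-repeat-free), then the `⌊n/s⌋` disjoint length-`s` blocks of `x` are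
pairwise distinct and pairwise at Hamming distance strictly greater than `t`. -/
theorem stmt9 {S : Type*} [Fintype S] [DecidableEq S]
    (n s t q : ℕ) (a δ : ℝ) (hq : q = Fintype.card S)
    (hsa : s = ⌊a * Real.logb q n⌋₊) (ht : δ * s ≤ (t : ℝ)) (hsn : s ≤ n)
    (x : ℕ → S)
    (hx : ∀ y : ℕ → S, dH x y n ≤ t → repeatFree y n s) :
    ∀ i j, i < n / s → j < n / s → i ≠ j →
      substr x (i * s) s ≠ substr x (j * s) s ∧
        t < hammingDist (substr x (i * s) s) (substr x (j * s) s) := by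
  intro i j hi hj hij
  have hs : 0 < s := by
    rcases Nat.eq_zero_or_pos s with h | h
    · subst h; simp at hi
    · exact h
  have hjs : j * s + s ≤ n := by
    have h1 : (j + 1) * s ≤ (n / s) * s := Nat.mul_le_mul_right s (Nat.succ_le_of_lt hj)
    have h2 : (n / s) * s ≤ n := Nat.div_mul_le_self n s
    nlinarith [h1, h2]
  have his : i * s + s ≤ n := by
    have h1 : (i + 1) * s ≤ (n / s) * s := Nat.mul_le_mul_right s (Nat.succ_le_of_lt hi)
    have h2 : (n / s) * s ≤ n := Nat.div_mul_le_self n s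
    nlinarith [h1, h2]
  suffices h : t < hammingDist (substr x (i * s) s) (substr x (j * s) s) by
    refine ⟨?_, h⟩
    intro heq
    rw [heq, hammingDist_self] at h
    omega
  by_contra hle
  push_neg at hle
  set y : ℕ → S := fun k => if j * s ≤ k ∧ k < j * s + s then x (i * s + (k - j * s)) else x k
    with hy
  have hdH : dH x y n ≤ t := by
    refine le_trans ?_ hle
    unfold dH hammingDist
    apply Finset.card_le_card_of_injOn (fun k => (⟨(k - j * s) % s, Nat.mod_lt _ hs⟩ : Fin s))
    · intro k hk
      simp only [Finset.mem_coe, Finset.mem_filter, Finset.mem_range] at hk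
      obtain ⟨hkn, hxy⟩ := hk
      have hblk : j * s ≤ k ∧ k < j * s + s := by
        by_contra hc
        apply hxy
        simp [hy, hc]
      have hd : k - j * s < s := by omega
      have hmod : (k - j * s) % s = k - j * s := Nat.mod_eq_of_lt hd
      simp only [Finset.mem_coe, Finset.mem_filter, Finset.mem_univ, true_and]
      intro heq
      apply hxy
      have e1 : substr x (i * s) s ⟨(k - j * s) % s, Nat.mod_lt _ hs⟩
          = x (i * s + (k - j * s)) := by simp [substr, hmod]
      have e2 : substr x (j * s) s ⟨(k - j * s) % s, Nat.mod_lt _ hs⟩ = x k := by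
        simp only [substr, hmod]
        congr 1
        omega
      have hy2 : y k = x (i * s + (k - j * s)) := by simp [hy, hblk]
      rw [hy2, ← e1, heq, e2]
    · intro k1 hk1 k2 hk2 heq
      simp only [Finset.mem_coe, Finset.mem_filter, Finset.mem_range] at hk1 hk2
      have hb1 : j * s ≤ k1 ∧ k1 < j * s + s := by
        by_contra hc; exact hk1.2 (by simp [hy, hc])
      have hb2 : j * s ≤ k2 ∧ k2 < j * s + s := by
        by_contra hc; exact hk2.2 (by simp [hy, hc])
      have := Fin.mk.injEq _ _ _ _ ▸ heq
      have hv : (k1 - j * s) % s = (k2 - j * s) % s := Fin.mk.inj_iff.mp heq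
      rw [Nat.mod_eq_of_lt (by omega), Nat.mod_eq_of_lt (by omega)] at hv
      omega
  have hrf := hx y hdH
  have heqsub : substr y (i * s) s = substr y (j * s) s := by
    funext k
    have hL : substr y (i * s) s k = x (i * s + k) := by
      have hc : ¬ (j * s ≤ i * s + (k : ℕ) ∧ i * s + (k : ℕ) < j * s + s) := by
        rcases Nat.lt_or_ge i j with h | h
        · intro ⟨h1, _⟩
          have : (i + 1) * s ≤ j * s := Nat.mul_le_mul_right s h
          have hk := k.isLt
          nlinarith
        · have hji : j < i := lt_of_le_of_ne h (Ne.symm hij)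
          intro ⟨_, h2⟩
          have : (j + 1) * s ≤ i * s := Nat.mul_le_mul_right s hji
          nlinarith
      simp [substr, hy, hc]
    have hR : substr y (j * s) s k = x (i * s + k) := by
      have hc : j * s ≤ j * s + (k : ℕ) ∧ j * s + (k : ℕ) < j * s + s :=
        ⟨Nat.le_add_right _ _, by have := k.isLt; omega⟩
      simp [substr, hy, hc]
    rw [hL, hR]
  have := hrf (i * s) (j * s) his hjs heqsub
  exact hij (Nat.eq_of_mul_eq_mul_right hs this)
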